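/- If X is a separable topological space with a zero-set diagonal, then X is submetrizable. -/

import Mathlib

open Set Topology

universe u

namespace DiagonalPaper

/-- The star of a set `A` with respect to a family `𝒰`:
the union of all members of `𝒰` meeting `A`. -/
def st {X : Type u} (A : Set X) (𝒰 : Set (Set X)) : Set X :=
  ⋃₀ {U | U ∈ 𝒰 ∧ (U ∩ A).Nonempty}

/-- Iterated star `Stⁿ(A, 𝒰)`. -/
def stn {X : Type u} (n : ℕ) (A : Set X) (𝒰 : Set (Set X)) : Set X :=
  (fun B => st B 𝒰)^[n] A

/-- `𝒰` is an open cover of the space `X`. -/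
def IsOpenCover {X : Type u} [TopologicalSpace X] (𝒰 : Set (Set X)) : Prop :=
  (∀ U ∈ 𝒰, IsOpen U) ∧ ⋃₀ 𝒰 = Set.univ

/-- `X` has a zero-set diagonal: a continuous `f : X² → [0,1]` with `f⁻¹(0) = Δ_X`. -/
def HasZeroSetDiagonal (X : Type u) [TopologicalSpace X] : Prop :=
  ∃ f : X × X → ℝ, Continuous f ∧ (∀ p, f p ∈ Set.Icc (0 : ℝ) 1) ∧
    f ⁻¹' {0} = Set.diagonal X

/-- `X` is submetrizable: there is a continuous injection of `X` into a metrizable space. -/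
def Submetrizable (X : Type u) [TopologicalSpace X] : Prop :=
  ∃ (Y : Type u) (tY : TopologicalSpace Y), @TopologicalSpace.MetrizableSpace Y tY ∧
    ∃ f : X → Y, @Continuous X Y _ tY f ∧ Function.Injective f

/-- Martin: a separable space with a zero-set diagonal is submetrizable. -/
theorem submetrizable_of_zeroSetDiagonal_of_separable
    (X : Type u) [TopologicalSpace X] [TopologicalSpace.SeparableSpace X]
    (hz : HasZeroSetDiagonal X) :
    Submetrizable X := by
  obtain ⟨f, hf, _, hf0⟩ := hz
  cases isEmpty_or_nonempty X with
  | inl h =>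
      exact ⟨ULift ℝ, inferInstance, inferInstance, fun x => (h.false x).elim,
        continuous_of_const (fun a => (h.false a).elim),
        fun a => (h.false a).elim⟩
  | inr h =>
      obtain ⟨u, hu⟩ := TopologicalSpace.exists_dense_seq X
      refine ⟨ULift (ℕ → ℝ), inferInstance, Homeomorph.ulift.isEmbedding.metrizableSpace,
        fun x => ⟨fun n => f (x, u n)⟩, ?_, ?_⟩
      · exact continuous_uliftUp.comp (continuous_pi fun n =>
          hf.comp (continuous_id.prodMk continuous_const))
      · intro x y hxy
        have hxy' : ∀ n, f (x, u n) = f (y, u n) := by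
          intro n; exact congrFun (congrArg ULift.down hxy) n
        have heq : (fun z => f (x, z)) = fun z => f (y, z) := by
          apply Continuous.ext_on hu
          · exact hf.comp (continuous_const.prodMk continuous_id)
          · exact hf.comp (continuous_const.prodMk continuous_id)
          · rintro _ ⟨n, rfl⟩; exact hxy' n
        have hx : f (x, x) = 0 := by
          have : (x, x) ∈ f ⁻¹' {0} := by rw [hf0]; rfl
          exact this
        have hy : f (y, x) = 0 := by
          have := congrFun heq x
          rw [← this, hx]
        have : (y, x) ∈ Set.diagonal X := by rw [← hf0]; exact hy
        exact this.symm

end DiagonalPaper
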